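/- Let μ: Θ → ℝ be a continuously differentiable function with μ' > 0, let r be a continuous positive density on ℝ with finite first moment, and define for cut-points a_1 < ... < a_n the quantities q_i = ∫_{U_i} r(x) dx and θ̂_i = μ^{-1}((1/q_i) ∫_{U_i} x r(x) dx). Then ∂θ̂_i/∂a_i = (r(a_i)/(q_i μ'(θ̂_i))) (μ(θ̂_i) - a_i), ∂θ̂_i/∂a_{i+1} = (r(a_{i+1})/(q_i μ'(θ̂_i))) (a_{i+1} - μ(θ̂_i)), and ∂θ̂_i/∂a_k = 0 for k ∉ {i, i+1}. -/

import Mathlib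

open MeasureTheory Set

/-- Partial derivatives of the assertions `θ̂_i(a) = μ⁻¹((1/q_i) ∫_{U_i} x r(x) dx)` with
respect to the cut-points `a_1 < ... < a_n`, where `q_i` is the `r`-mass of
`U_i = [a_i, a_{i+1})` (with `a_0 = -∞`, `a_{n+1} = ∞`) and `μ` is continuously
differentiable with `μ' > 0` and inverse `μinv`. -/
theorem smml_assertion_partial_derivs
    (n : ℕ) (hn : 1 ≤ n)
    (r : ℝ → ℝ) (hr : Continuous r) (hrpos : ∀ x, 0 < r x)
    (hint : Integrable r) (hnorm : ∫ x, r x = 1)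
    (hint1 : Integrable (fun x => x * r x))
    (μ dμ : ℝ → ℝ) (hμ : ∀ θ, HasDerivAt μ (dμ θ) θ) (hdμcont : Continuous dμ)
    (hdμpos : ∀ θ, 0 < dμ θ)
    (μinv : ℝ → ℝ) (hinvl : ∀ θ, μinv (μ θ) = θ) (hinvr : ∀ y, μ (μinv y) = y)
    (R : ℝ → ℝ) (hR : ∀ x, R x = ∫ t in Iic x, r t)
    (Q : (ℕ → ℝ) → ℕ → ℝ)
    (hQ : ∀ b i, Q b i = (if i = n then 1 else R (b (i + 1))) - (if i = 0 then 0 else R (b i)))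
    (M : (ℕ → ℝ) → ℕ → ℝ)
    (hM : ∀ b i, M b i =
      (if i = n then ∫ t, t * r t else ∫ t in Iic (b (i + 1)), t * r t) -
      (if i = 0 then 0 else ∫ t in Iic (b i), t * r t))
    (TH : (ℕ → ℝ) → ℕ → ℝ) (hTH : ∀ b i, TH b i = μinv (M b i / Q b i))
    (a : ℕ → ℝ) (ha : ∀ i j, 1 ≤ i → i < j → j ≤ n → a i < a j)
    (i k : ℕ) (hi : i ≤ n) (hk1 : 1 ≤ k) (hk2 : k ≤ n) :
    HasDerivAt (fun t => TH (Function.update a k t) i)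
      (if k = i then r (a i) / (Q a i * dμ (TH a i)) * (μ (TH a i) - a i)
       else if k = i + 1 then r (a (i + 1)) / (Q a i * dμ (TH a i)) * (a (i + 1) - μ (TH a i))
       else 0) (a k) := by
  -- proof
  -- continuity / measurability prerequisites
  have hrmeas : StronglyMeasurableAtFilter r (nhds (a k)) :=
    hr.stronglyMeasurable.stronglyMeasurableAtFilter
  have hcont1 : Continuous (fun x : ℝ => x * r x) := continuous_id.mul hr
  -- derivative of R
  have hRder : ∀ x, HasDerivAt R (r x) x := by
    intro x
    have heq : ∀ y, R y = R 0 + ∫ t in (0:ℝ)..y, r t := by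
      intro y
      rw [hR y, hR 0, ← intervalIntegral.integral_Iic_sub_Iic hint.integrableOn hint.integrableOn]
      ring
    have hd : HasDerivAt (fun y => R 0 + ∫ t in (0:ℝ)..y, r t) (r x) x := by
      exact (intervalIntegral.integral_hasDerivAt_right hint.intervalIntegrable
        hr.stronglyMeasurable.stronglyMeasurableAtFilter hr.continuousAt).const_add (R 0)
    exact (funext heq) ▸ hd
  -- derivative of the first-moment CDF
  have hFder : ∀ x, HasDerivAt (fun y => ∫ t in Iic y, t * r t) (x * r x) x := by
    intro x
    have heq : ∀ y : ℝ, (∫ t in Iic y, t * r t)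
        = (∫ t in Iic (0:ℝ), t * r t) + ∫ t in (0:ℝ)..y, t * r t := by
      intro y
      rw [← intervalIntegral.integral_Iic_sub_Iic hint1.integrableOn hint1.integrableOn]
      ring
    have hd : HasDerivAt (fun y => (∫ t in Iic (0:ℝ), t * r t) + ∫ t in (0:ℝ)..y, t * r t)
        (x * r x) x :=
      (intervalIntegral.integral_hasDerivAt_right hint1.intervalIntegrable
        hcont1.stronglyMeasurable.stronglyMeasurableAtFilter hcont1.continuousAt).const_add _
    exact (funext heq) ▸ hd
  -- μ is strictly monotone, μinv is continuous and differentiable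
  have hμmono : StrictMono μ := by
    apply strictMono_of_deriv_pos
    intro x
    rw [(hμ x).deriv]
    exact hdμpos x
  have hμsurj : Function.Surjective μ := fun y => ⟨μinv y, hinvr y⟩
  have hμinvcont : Continuous μinv := by
    have e := StrictMono.orderIsoOfSurjective μ hμmono hμsurj
    have : μinv = ⇑(StrictMono.orderIsoOfSurjective μ hμmono hμsurj).symm := by
      funext y
      have := StrictMono.orderIsoOfSurjective_self_symm_apply μ hμmono hμsurj y
      calc μinv y = μinv (μ ((StrictMono.orderIsoOfSurjective μ hμmono hμsurj).symm y)) := by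
            rw [this]
        _ = _ := hinvl _
    rw [this]
    exact OrderIso.continuous _
  have hμinvder : ∀ y, HasDerivAt μinv (dμ (μinv y))⁻¹ y := by
    intro y
    refine HasDerivAt.of_local_left_inverse hμinvcont.continuousAt (hμ (μinv y))
      (ne_of_gt (hdμpos _)) ?_
    exact Filter.Eventually.of_forall hinvr
  -- positivity facts about R and Q
  have hRpos : ∀ x, 0 < R x := by
    intro x
    rw [hR]
    rw [setIntegral_pos_iff_support_of_nonneg_ae
      (Filter.Eventually.of_forall fun t => (hrpos t).le) hint.integrableOn]
    have : Function.support r = univ := by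
      ext t; simp [Function.support, (hrpos t).ne']
    rw [this, univ_inter]
    simp [Real.volume_Iic]
  have hRlt1 : ∀ x, R x < 1 := by
    intro x
    have hsplit := intervalIntegral.integral_Iic_add_Ioi (b := x) hint.integrableOn hint.integrableOn
    rw [hnorm] at hsplit
    have hpos : 0 < ∫ t in Ioi x, r t := by
      rw [setIntegral_pos_iff_support_of_nonneg_ae
        (Filter.Eventually.of_forall fun t => (hrpos t).le) hint.integrableOn]
      have : Function.support r = univ := by
        ext t; simp [Function.support, (hrpos t).ne']
      rw [this, univ_inter]
      simp [Real.volume_Ioi]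
    rw [hR]
    linarith
  have hRmono : StrictMono R := by
    apply strictMono_of_deriv_pos
    intro x
    rw [(hRder x).deriv]
    exact hrpos x
  have hQpos : 0 < Q a i := by
    rw [hQ]
    rcases Nat.eq_zero_or_pos i with h0 | h0
    · have hin : i ≠ n := by omega
      rw [if_neg hin, if_pos h0, sub_zero]
      exact hRpos _
    · have hi0 : i ≠ 0 := by omega
      rcases eq_or_ne i n with hin | hin
      · simp only [if_pos hin, if_neg hi0]
        have := hRlt1 (a i); linarith
      · simp only [if_neg hin, if_neg hi0]
        have := hRmono (ha i (i + 1) h0 (by omega) (by omega))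
        linarith
  have hμTH : μ (TH a i) = M a i / Q a i := by rw [hTH]; exact hinvr _
  have hdμne : dμ (TH a i) ≠ 0 := ne_of_gt (hdμpos _)
  have hQne : Q a i ≠ 0 := ne_of_gt hQpos
  -- case analysis
  rcases eq_or_ne k i with hki | hki
  · -- k = i, so i ≥ 1
    subst hki
    have hk0 : k ≠ 0 := by omega
    have hk1' : k + 1 ≠ k := by omega
    set CQ : ℝ := if k = n then 1 else R (a (k + 1)) with hCQ
    set CM : ℝ := if k = n then ∫ t, t * r t else ∫ t in Iic (a (k + 1)), t * r t with hCM
    have hfeq : ∀ t, TH (Function.update a k t) k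
        = μinv ((CM - ∫ s in Iic t, s * r s) / (CQ - R t)) := by
      intro t
      rw [hTH, hM, hQ]
      simp [Function.update_self, Function.update_of_ne hk1', hk0, hCQ, hCM]
    have hQval : Q a k = CQ - R (a k) := by
      rw [hQ]; simp [hk0, hCQ]
    have hMval : M a k = CM - ∫ s in Iic (a k), s * r s := by
      rw [hM]; simp [hk0, hCM]
    have h1 : HasDerivAt (fun t => CM - ∫ s in Iic t, s * r s) (-(a k * r (a k))) (a k) :=
      ((hFder (a k)).const_sub CM)
    have h2 : HasDerivAt (fun t => CQ - R t) (-(r (a k))) (a k) := (hRder (a k)).const_sub CQ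
    have hQne' : CQ - R (a k) ≠ 0 := by rw [← hQval]; exact hQne
    have hdiv := h1.div h2 hQne'
    have hcomp := (hμinvder _).comp (a k) hdiv
    have hTHval : μinv ((CM - ∫ s in Iic (a k), s * r s) / (CQ - R (a k))) = TH a k := by
      rw [hTH, hMval, hQval]
    simp only [Pi.div_apply] at hcomp
    rw [hTHval] at hcomp
    have hd2 := hcomp.congr_of_eventuallyEq (Filter.Eventually.of_forall hfeq)
    refine hd2.congr_deriv ?_
    symm
    rw [if_pos rfl]
    rw [← hQval, ← hMval]
    have hMeq : M a k = μ (TH a k) * Q a k := by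
      rw [hμTH]; field_simp
    rw [hMeq]
    field_simp
    ring
  · rcases eq_or_ne k (i + 1) with hki1 | hki1
    · -- k = i + 1
      subst hki1
      have hin : i ≠ n := by omega
      have hii : i ≠ i + 1 := by omega
      set CQ : ℝ := if i = 0 then 0 else R (a i) with hCQ
      set CM : ℝ := if i = 0 then 0 else ∫ t in Iic (a i), t * r t with hCM
      have hfeq : ∀ t, TH (Function.update a (i + 1) t) i
          = μinv (((∫ s in Iic t, s * r s) - CM) / (R t - CQ)) := by
        intro t
        rw [hTH, hM, hQ]
        simp [Function.update_self, Function.update_of_ne hii, hin, hCQ, hCM]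
      have hQval : Q a i = R (a (i + 1)) - CQ := by rw [hQ]; simp [hin, hCQ]
      have hMval : M a i = (∫ s in Iic (a (i + 1)), s * r s) - CM := by rw [hM]; simp [hin, hCM]
      have h1 : HasDerivAt (fun t => (∫ s in Iic t, s * r s) - CM)
          (a (i + 1) * r (a (i + 1))) (a (i + 1)) := (hFder (a (i + 1))).sub_const CM
      have h2 : HasDerivAt (fun t => R t - CQ) (r (a (i + 1))) (a (i + 1)) :=
        (hRder (a (i + 1))).sub_const CQ
      have hQne' : R (a (i + 1)) - CQ ≠ 0 := by rw [← hQval]; exact hQne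
      have hdiv := h1.div h2 hQne'
      have hcomp := (hμinvder _).comp (a (i + 1)) hdiv
      have hTHval : μinv (((∫ s in Iic (a (i + 1)), s * r s) - CM) / (R (a (i + 1)) - CQ))
          = TH a i := by rw [hTH, hMval, hQval]
      simp only [Pi.div_apply] at hcomp
      rw [hTHval] at hcomp
      have hd2 := hcomp.congr_of_eventuallyEq (Filter.Eventually.of_forall hfeq)
      refine hd2.congr_deriv ?_
      symm
      rw [if_neg hki, if_pos rfl]
      rw [← hQval, ← hMval]
      have hMeq : M a i = μ (TH a i) * Q a i := by
        rw [hμTH]; field_simp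
      rw [hMeq]
      field_simp
    · -- k ∉ {i, i+1}: constant function
      have hfeq : ∀ t, TH (Function.update a k t) i = TH a i := by
        intro t
        rw [hTH, hM, hQ, hTH, hM, hQ]
        rw [Function.update_of_ne (Ne.symm hki), Function.update_of_ne (fun h => hki1 h.symm)]
      rw [if_neg hki, if_neg hki1]
      have := hasDerivAt_const (a k) (TH a i)
      exact this.congr_of_eventuallyEq (Filter.Eventually.of_forall hfeq)
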